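/- The function f is differentiable at every point x > 0 (and continuously differentiable on (0,∞)), and its derivative satisfies the differential equation x·(x−1)·f'(x) + (x+1)·f(x) = 1 for every x > 0. -/

import Mathlib

/-- The Shearer function: `f x = ((1-x) + x·ln x)/(x-1)²` for `x ∈ (0,∞)\{1}`,
`f 1 = 1/2`, and `f x = 1` for `x ≤ 0`. -/
noncomputable def shearerF (x : ℝ) : ℝ :=
  if x ≤ 0 then 1
  else if x = 1 then 1 / 2
  else ((1 - x) + x * Real.log x) / (x - 1) ^ 2

open Real Filter Set

noncomputable def sg (x : ℝ) : ℝ := (2*(x-1) - (x+1)*Real.log x)/(x-1)^3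

lemma hev1 : ∀ᶠ x in nhdsWithin (1:ℝ) {(1:ℝ)}ᶜ, 0 < x ∧ x ≠ 1 := by
  filter_upwards [eventually_nhdsWithin_of_eventually_nhds
    (eventually_gt_nhds (by norm_num : (0:ℝ) < 1)), self_mem_nhdsWithin] with x h1 h2
  exact ⟨h1, h2⟩

lemma hasDerivAt_N {x : ℝ} (hx : 0 < x) :
    HasDerivAt (fun y => (1-y) + y*Real.log y) (Real.log x) x := by
  have h1 : HasDerivAt (fun y : ℝ => (1:ℝ) - y) (-1) x := by
    exact ((hasDerivAt_const x (1:ℝ)).sub (hasDerivAt_id x)).congr_deriv (by ring)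
  have h2 : HasDerivAt (fun y : ℝ => y * Real.log y) (1 * Real.log x + x * x⁻¹) x :=
    (hasDerivAt_id x).mul (Real.hasDerivAt_log hx.ne')
  have := h1.add h2
  refine this.congr_deriv ?_
  field_simp
  ring

lemma hasDerivAt_D {x : ℝ} : HasDerivAt (fun y : ℝ => (y-1)^2) (2*(x-1)) x := by
  have := ((hasDerivAt_id x).sub_const 1).pow 2
  refine this.congr_deriv ?_
  simp only [id_eq]; ring

lemma hasDerivAt_M {x : ℝ} (hx : 0 < x) :
    HasDerivAt (fun y => 2*(y-1) - (y+1)*Real.log y) (2 - Real.log x - (x+1)/x) x := by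
  have h1 : HasDerivAt (fun y : ℝ => 2*(y-1)) 2 x := by
    simpa using ((hasDerivAt_id x).sub_const 1).const_mul (2:ℝ)
  have h2 : HasDerivAt (fun y : ℝ => (y+1) * Real.log y) (1 * Real.log x + (x+1) * x⁻¹) x :=
    ((hasDerivAt_id x).add_const 1).mul (Real.hasDerivAt_log hx.ne')
  have := h1.sub h2
  refine this.congr_deriv ?_
  field_simp
  ring

lemma hasDerivAt_P {x : ℝ} : HasDerivAt (fun y : ℝ => (y-1)^3) (3*(x-1)^2) x := by
  have := ((hasDerivAt_id x).sub_const 1).pow 3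
  refine this.congr_deriv ?_
  simp only [id_eq]; ring

lemma hasDerivAt_M' {x : ℝ} (hx : 0 < x) :
    HasDerivAt (fun y => 2 - Real.log y - (y+1)/y) (1/x^2 - 1/x) x := by
  have h1 : HasDerivAt (fun y : ℝ => 2 - Real.log y) (0 - x⁻¹) x :=
    (hasDerivAt_const x (2:ℝ)).sub (Real.hasDerivAt_log hx.ne')
  have h2 : HasDerivAt (fun y : ℝ => (y+1)/y) ((1*x - (x+1)*1)/x^2) x :=
    ((hasDerivAt_id x).add_const 1).div (hasDerivAt_id x) hx.ne'
  have := h1.sub h2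
  refine this.congr_deriv ?_
  field_simp
  ring

lemma hasDerivAt_P' {x : ℝ} : HasDerivAt (fun y : ℝ => 3*(y-1)^2) (6*(x-1)) x := by
  have := (((hasDerivAt_id x).sub_const 1).pow 2).const_mul (3:ℝ)
  refine this.congr_deriv ?_
  simp only [id_eq]; ring

-- third-level limit
lemma lim3 : Tendsto (fun x => (1/x^2 - 1/x)/(6*(x-1))) (nhdsWithin (1:ℝ) {(1:ℝ)}ᶜ)
    (nhds (-1/6)) := by
  have h : Tendsto (fun x : ℝ => -1/(6*x^2)) (nhdsWithin (1:ℝ) {(1:ℝ)}ᶜ) (nhds (-1/6)) := by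
    have hc : ContinuousAt (fun x : ℝ => -1/(6*x^2)) 1 := by
      apply ContinuousAt.div continuousAt_const (by fun_prop) (by norm_num)
    have := hc.tendsto
    simpa using this.mono_left nhdsWithin_le_nhds
  refine h.congr' ?_
  filter_upwards [hev1] with x ⟨hx, hne⟩
  have hx0 : x ≠ 0 := hx.ne'
  have h1 : x - 1 ≠ 0 := sub_ne_zero.mpr hne
  field_simp
  ring

lemma lim2 : Tendsto (fun x => (2 - Real.log x - (x+1)/x)/(3*(x-1)^2))
    (nhdsWithin (1:ℝ) {(1:ℝ)}ᶜ) (nhds (-1/6)) := by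
  apply HasDerivAt.lhopital_zero_nhdsNE
  · filter_upwards [hev1] with x ⟨hx, _⟩ using hasDerivAt_M' hx
  · filter_upwards [hev1] with x _ using hasDerivAt_P'
  · filter_upwards [hev1] with x ⟨_, hne⟩
    have : x - 1 ≠ 0 := sub_ne_zero.mpr hne
    positivity
  · have hc : ContinuousAt (fun x : ℝ => 2 - Real.log x - (x+1)/x) 1 := by
      have := (Real.continuousAt_log one_ne_zero)
      fun_prop (disch := norm_num)
    have := hc.tendsto
    have h2 := this.mono_left (nhdsWithin_le_nhds (s := ({1}ᶜ : Set ℝ)))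
    convert h2 using 2
    norm_num
  · have hc : ContinuousAt (fun x : ℝ => 3*(x-1)^2) 1 := by fun_prop
    have := hc.tendsto
    simpa using this.mono_left nhdsWithin_le_nhds
  · exact lim3

lemma lim_sg : Tendsto sg (nhdsWithin (1:ℝ) {(1:ℝ)}ᶜ) (nhds (-1/6)) := by
  apply HasDerivAt.lhopital_zero_nhdsNE
  · filter_upwards [hev1] with x ⟨hx, _⟩ using hasDerivAt_M hx
  · filter_upwards [hev1] with x _ using hasDerivAt_P
  · filter_upwards [hev1] with x ⟨_, hne⟩
    have : x - 1 ≠ 0 := sub_ne_zero.mpr hne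
    positivity
  · have hc : ContinuousAt (fun x : ℝ => 2*(x-1) - (x+1)*Real.log x) 1 := by
      have := (Real.continuousAt_log one_ne_zero)
      fun_prop (disch := norm_num)
    have := hc.tendsto
    simpa using this.mono_left nhdsWithin_le_nhds
  · have hc : ContinuousAt (fun x : ℝ => (x-1)^3) 1 := by fun_prop
    have := hc.tendsto
    simpa using this.mono_left nhdsWithin_le_nhds
  · exact lim2

lemma lim1b : Tendsto (fun x => Real.log x / (2*(x-1))) (nhdsWithin (1:ℝ) {(1:ℝ)}ᶜ)
    (nhds (1/2)) := by
  apply HasDerivAt.lhopital_zero_nhdsNE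
  · filter_upwards [hev1] with x ⟨hx, _⟩ using Real.hasDerivAt_log hx.ne'
  · filter_upwards [hev1] with x _
    simpa using ((hasDerivAt_id x).sub_const 1).const_mul (2:ℝ)
  · filter_upwards [hev1] with x _; norm_num
  · have := (Real.continuousAt_log one_ne_zero).tendsto
    simpa using this.mono_left nhdsWithin_le_nhds
  · have hc : ContinuousAt (fun x : ℝ => 2*(x-1)) 1 := by fun_prop
    have := hc.tendsto
    simpa using this.mono_left nhdsWithin_le_nhds
  · have hc : ContinuousAt (fun x : ℝ => x⁻¹ / 2) 1 := by
      fun_prop (disch := norm_num)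
    have := hc.tendsto
    simpa using this.mono_left nhdsWithin_le_nhds

lemma lim_f : Tendsto (fun x => ((1-x) + x*Real.log x)/(x-1)^2)
    (nhdsWithin (1:ℝ) {(1:ℝ)}ᶜ) (nhds (1/2)) := by
  apply HasDerivAt.lhopital_zero_nhdsNE
  · filter_upwards [hev1] with x ⟨hx, _⟩ using hasDerivAt_N hx
  · filter_upwards [hev1] with x _ using hasDerivAt_D
  · filter_upwards [hev1] with x ⟨_, hne⟩
    have : x - 1 ≠ 0 := sub_ne_zero.mpr hne
    simp [this, sub_ne_zero.mpr hne]
  · have hc : ContinuousAt (fun x : ℝ => (1-x) + x*Real.log x) 1 := by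
      have := (Real.continuousAt_log one_ne_zero)
      fun_prop
    have := hc.tendsto
    simpa using this.mono_left nhdsWithin_le_nhds
  · have hc : ContinuousAt (fun x : ℝ => (x-1)^2) 1 := by fun_prop
    have := hc.tendsto
    simpa using this.mono_left nhdsWithin_le_nhds
  · exact lim1b

lemma shearerF_eqOn {x : ℝ} (hx : 0 < x) (hne : x ≠ 1) :
    shearerF =ᶠ[nhds x] fun y => ((1-y) + y*Real.log y)/(y-1)^2 := by
  have hopen : IsOpen {y : ℝ | 0 < y ∧ y ≠ 1} :=
    (isOpen_lt continuous_const continuous_id).inter isOpen_ne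
  filter_upwards [hopen.mem_nhds ⟨hx, hne⟩] with y ⟨hy, hyne⟩
  simp only [shearerF, if_neg (not_le.mpr hy), if_neg hyne]

lemma hasDerivAt_shearerF {x : ℝ} (hx : 0 < x) (hne : x ≠ 1) :
    HasDerivAt shearerF (sg x) x := by
  have h1 : x - 1 ≠ 0 := sub_ne_zero.mpr hne
  have hD0 : (x-1)^2 ≠ 0 := pow_ne_zero _ h1
  have h := (hasDerivAt_N hx).div (hasDerivAt_D (x := x)) hD0
  have h2 : HasDerivAt (fun y => ((1-y) + y*Real.log y)/(y-1)^2) (sg x) x := by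
    refine h.congr_deriv ?_
    unfold sg
    field_simp
    ring
  exact h2.congr_of_eventuallyEq (shearerF_eqOn hx hne)

lemma lim_shearerF : Tendsto shearerF (nhdsWithin (1:ℝ) {(1:ℝ)}ᶜ) (nhds (1/2)) := by
  refine lim_f.congr' ?_
  filter_upwards [hev1] with x ⟨hx, hne⟩
  simp only [shearerF, if_neg (not_le.mpr hx), if_neg hne]

lemma shearerF_one : shearerF 1 = 1/2 := by norm_num [shearerF]

lemma deriv_eq_sg_right : Tendsto (deriv shearerF) (nhdsWithin (1:ℝ) (Ioi 1))
    (nhds (-1/6)) := by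
  have hle : nhdsWithin (1:ℝ) (Ioi 1) ≤ nhdsWithin (1:ℝ) {(1:ℝ)}ᶜ :=
    nhdsWithin_mono 1 (fun y hy => ne_of_gt hy)
  refine (lim_sg.mono_left hle).congr' ?_
  filter_upwards [self_mem_nhdsWithin] with y (hy : 1 < y)
  exact ((hasDerivAt_shearerF (by linarith) (ne_of_gt hy)).deriv).symm

lemma deriv_eq_sg_left : Tendsto (deriv shearerF) (nhdsWithin (1:ℝ) (Iio 1))
    (nhds (-1/6)) := by
  have hle : nhdsWithin (1:ℝ) (Iio 1) ≤ nhdsWithin (1:ℝ) {(1:ℝ)}ᶜ :=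
    nhdsWithin_mono 1 (fun y hy => ne_of_lt hy)
  refine (lim_sg.mono_left hle).congr' ?_
  filter_upwards [self_mem_nhdsWithin, eventually_nhdsWithin_of_eventually_nhds
    (eventually_gt_nhds (by norm_num : (0:ℝ) < 1))] with y (hy : y < 1) hy0
  exact ((hasDerivAt_shearerF hy0 (ne_of_lt hy)).deriv).symm

lemma hasDerivAt_shearerF_one : HasDerivAt shearerF (-1/6) 1 := by
  have A : HasDerivWithinAt shearerF (-1/6) (Ici 1) 1 := by
    apply hasDerivWithinAt_Ici_of_tendsto_deriv (s := Ioo 1 2)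
    · exact fun y hy =>
        (hasDerivAt_shearerF (by linarith [hy.1]) (ne_of_gt hy.1)).differentiableAt.differentiableWithinAt
    · rw [ContinuousWithinAt, shearerF_one]
      exact lim_shearerF.mono_left (nhdsWithin_mono 1 (fun y hy => ne_of_gt hy.1))
    · exact Ioo_mem_nhdsGT_of_mem ⟨le_refl 1, one_lt_two⟩
    · exact deriv_eq_sg_right
  have B : HasDerivWithinAt shearerF (-1/6) (Iic 1) 1 := by
    apply hasDerivWithinAt_Iic_of_tendsto_deriv (s := Ioo (1/2) 1)
    · exact fun y hy =>
        (hasDerivAt_shearerF (by linarith [hy.1]) (ne_of_lt hy.2)).differentiableAt.differentiableWithinAt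
    · rw [ContinuousWithinAt, shearerF_one]
      exact lim_shearerF.mono_left (nhdsWithin_mono 1 (fun y hy => ne_of_lt hy.2))
    · exact Ioo_mem_nhdsLT_of_mem ⟨by norm_num, le_refl 1⟩
    · exact deriv_eq_sg_left
  have := B.union A
  rw [Iic_union_Ici] at this
  exact hasDerivWithinAt_univ.mp this

/-- `f` is differentiable at every `x > 0`, continuously differentiable
on `(0,∞)`, and satisfies `x(x-1)f'(x) + (x+1)f(x) = 1` for every `x > 0`. -/
theorem shearerF_differential_equation :
    (∀ x : ℝ, 0 < x → DifferentiableAt ℝ shearerF x) ∧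
    ContinuousOn (deriv shearerF) (Set.Ioi (0 : ℝ)) ∧
    ∀ x : ℝ, 0 < x →
      x * (x - 1) * deriv shearerF x + (x + 1) * shearerF x = 1 := by
  have hdiff : ∀ x : ℝ, 0 < x → DifferentiableAt ℝ shearerF x := by
    intro x hx
    by_cases h : x = 1
    · subst h; exact hasDerivAt_shearerF_one.differentiableAt
    · exact (hasDerivAt_shearerF hx h).differentiableAt
  have d1 : deriv shearerF 1 = -1/6 := hasDerivAt_shearerF_one.deriv
  have dx : ∀ x : ℝ, 0 < x → x ≠ 1 → deriv shearerF x = sg x := fun x hx h =>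
    (hasDerivAt_shearerF hx h).deriv
  refine ⟨hdiff, ?_, ?_⟩
  · intro x hx
    apply ContinuousAt.continuousWithinAt
    by_cases h : x = 1
    · subst h
      have T : Tendsto (deriv shearerF) (nhds 1) (nhds (-1/6)) := by
        rw [← nhdsNE_sup_pure]
        refine tendsto_sup.mpr ⟨?_, ?_⟩
        · refine lim_sg.congr' ?_
          filter_upwards [hev1] with y ⟨hy, hne⟩ using (dx y hy hne).symm
        · rw [← d1]; exact tendsto_pure_nhds _ _
      unfold ContinuousAt
      rw [d1]
      exact T
    · have hx' : (0:ℝ) < x := hx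
      have hsg : ContinuousAt sg x := by
        unfold sg
        have hl : ContinuousAt Real.log x := Real.continuousAt_log hx'.ne'
        refine ContinuousAt.div ?_ (by fun_prop) (pow_ne_zero _ (sub_ne_zero.mpr h))
        exact ContinuousAt.sub (by fun_prop) (ContinuousAt.mul (by fun_prop) hl)
      refine hsg.congr ?_
      have hopen : IsOpen {y : ℝ | 0 < y ∧ y ≠ 1} :=
        (isOpen_lt continuous_const continuous_id).inter isOpen_ne
      filter_upwards [hopen.mem_nhds ⟨hx', h⟩] with y ⟨hy, hyne⟩ using (dx y hy hyne).symm
  · intro x hx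
    by_cases h : x = 1
    · subst h
      rw [d1, shearerF_one]
      norm_num
    · rw [dx x hx h]
      have h1 : x - 1 ≠ 0 := sub_ne_zero.mpr h
      simp only [shearerF, if_neg (not_le.mpr hx), if_neg h, sg]
      field_simp
      ring
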